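/- arXiv:1912.09170 — 4 statements merged into one kernel-verified Lean document; each statement's English description precedes it below -/
import Mathlib

section
/- Let two tasks with weights w₁, w₂ > 0 be executed in series (one after the other) within total deadline D > 0, each at constant speed, with α > 1. The minimum total energy over all splits of D into execution times x₁ + x₂ = D, x₁, x₂ > 0, of w₁^α/x₁^{α-1} + w₂^α/x₂^{α-1} equals (w₁ + w₂)^α / D^{α-1}, attained at xᵢ = D·wᵢ/(w₁+w₂). -/
open Real

/-- One-task algebra: `w^α / (D*w/s)^(α-1) = w * s^(α-1) / D^(α-1)` for positive reals. -/
lemma aux_energy_eq (w s D α : ℝ) (hw : 0 < w) (hs : 0 < s) (hD : 0 < D) :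
    w ^ α / (D * w / s) ^ (α - 1) = w * s ^ (α - 1) / D ^ (α - 1) := by
  have hw' : w ^ α = w * w ^ (α - 1) := by
    rw [show α = 1 + (α - 1) by ring, Real.rpow_add hw, Real.rpow_one]
    ring_nf
  rw [div_rpow (by positivity) hs.le, mul_rpow hD.le hw.le, hw']
  have h1 : (0:ℝ) < w ^ (α - 1) := by positivity
  have h2 : (0:ℝ) < D ^ (α - 1) := by positivity
  have h3 : (0:ℝ) < s ^ (α - 1) := by positivity
  field_simp
/-- Lower bound via Hölder (weighted form). -/
lemma aux_lower (w₁ w₂ D α : ℝ) (hw₁ : 0 < w₁) (hw₂ : 0 < w₂) (hD : 0 < D) (hα : 1 < α)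
    (x₁ x₂ : ℝ) (hx₁ : 0 < x₁) (hx₂ : 0 < x₂) (hsum : x₁ + x₂ = D) :
    (w₁ + w₂) ^ α / D ^ (α - 1) ≤ w₁ ^ α / x₁ ^ (α - 1) + w₂ ^ α / x₂ ^ (α - 1) := by
  have hα0 : (0:ℝ) < α := lt_trans one_pos hα
  set S := w₁ ^ α / x₁ ^ (α - 1) + w₂ ^ α / x₂ ^ (α - 1) with hS
  have hS0 : 0 < S := by positivity
  -- Hölder: ∑ x i * (w i / x i) ≤ (∑ x i)^(1-1/α) * (∑ x i * (w i / x i)^α)^(1/α)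
  have key := Real.inner_le_weight_mul_Lp_of_nonneg (Finset.univ : Finset (Fin 2)) hα.le
      (fun i => if i = 0 then x₁ else x₂) (fun i => if i = 0 then w₁ / x₁ else w₂ / x₂)
      (fun i => by split <;> positivity)
      (fun i => by split <;> positivity)
  have e1 : ∀ (x w : ℝ), 0 < x → 0 < w → x * (w / x) ^ α = w ^ α / x ^ (α - 1) := by
    intro x w hx hw
    have hx' : x ^ α = x * x ^ (α - 1) := by
      rw [show α = 1 + (α - 1) by ring, Real.rpow_add hx, Real.rpow_one]
      ring_nf
    rw [div_rpow hw.le hx.le, hx']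
    have h1 : (0:ℝ) < x ^ (α - 1) := by positivity
    field_simp
  simp only [Fin.sum_univ_two] at key
  norm_num at key
  rw [mul_div_cancel₀ _ hx₁.ne', mul_div_cancel₀ _ hx₂.ne', hsum,
    e1 x₁ w₁ hx₁ hw₁, e1 x₂ w₂ hx₂ hw₂, ← hS] at key
  -- raise to power α
  have := Real.rpow_le_rpow (by positivity) key hα0.le
  rw [Real.mul_rpow (by positivity) (by positivity), ← Real.rpow_mul hD.le,
    ← Real.rpow_mul hS0.le, sub_mul, one_mul, inv_mul_cancel₀ hα0.ne',
    Real.rpow_one] at this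
  rw [div_le_iff₀ (by positivity)]
  linarith [this]

/-- Two tasks of weights `w₁, w₂ > 0` executed in series within deadline `D > 0`, each at
constant speed, with `α > 1`: the minimum of `w₁^α/x₁^(α-1) + w₂^α/x₂^(α-1)` over all
splits `x₁ + x₂ = D`, `x₁, x₂ > 0`, equals `(w₁+w₂)^α / D^(α-1)`, attained at
`xᵢ = D * wᵢ / (w₁+w₂)`. -/
theorem series_two_tasks_min_energy (w₁ w₂ D α : ℝ)
    (hw₁ : 0 < w₁) (hw₂ : 0 < w₂) (hD : 0 < D) (hα : 1 < α) :
    IsLeast {E : ℝ | ∃ x₁ x₂ : ℝ, 0 < x₁ ∧ 0 < x₂ ∧ x₁ + x₂ = D ∧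
        E = w₁ ^ α / x₁ ^ (α - 1) + w₂ ^ α / x₂ ^ (α - 1)}
      ((w₁ + w₂) ^ α / D ^ (α - 1)) ∧
    w₁ ^ α / (D * w₁ / (w₁ + w₂)) ^ (α - 1) + w₂ ^ α / (D * w₂ / (w₁ + w₂)) ^ (α - 1)
      = (w₁ + w₂) ^ α / D ^ (α - 1) := by
  have hs : 0 < w₁ + w₂ := by positivity
  have heq : w₁ ^ α / (D * w₁ / (w₁ + w₂)) ^ (α - 1)
      + w₂ ^ α / (D * w₂ / (w₁ + w₂)) ^ (α - 1) = (w₁ + w₂) ^ α / D ^ (α - 1) := by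
    rw [aux_energy_eq w₁ (w₁ + w₂) D α hw₁ hs hD,
      aux_energy_eq w₂ (w₁ + w₂) D α hw₂ hs hD, ← add_div, ← add_mul,
      show (w₁ + w₂) ^ α = (w₁ + w₂) * (w₁ + w₂) ^ (α - 1) by
        rw [show α = 1 + (α - 1) by ring, Real.rpow_add hs, Real.rpow_one]; ring_nf]
  refine ⟨⟨⟨D * w₁ / (w₁ + w₂), D * w₂ / (w₁ + w₂), by positivity, by positivity, ?_,
      heq.symm⟩, ?_⟩, heq⟩
  · field_simp
  · rintro E ⟨x₁, x₂, hx₁, hx₂, hsum, rfl⟩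
    exact aux_lower w₁ w₂ D α hw₁ hw₂ hD hα x₁ x₂ hx₁ hx₂ hsum
end

section
/- Define the equivalent weight of an SP-graph recursively: weight(single task of weight w) = w, weight(G₁;G₂) = weight(G₁) + weight(G₂), and weight(G₁||G₂) = (weight(G₁)^α + weight(G₂)^α)^{1/α}, with α > 1. Then the minimum energy to execute an SP-graph G under deadline D > 0 (with unbounded speeds, each task at constant speed, respecting the series/parallel structure) equals weight(G)^α / D^{α-1}. -/
open Real

/-- Series-parallel graphs: a single task of a given weight, a series composition, or a
parallel composition. -/
inductive SPG where
  | task (w : ℝ) : SPG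
  | series (G₁ G₂ : SPG) : SPG
  | par (G₁ G₂ : SPG) : SPG

/-- All task weights are positive. -/
def SPG.posWeights : SPG → Prop
  | .task w => 0 < w
  | .series G₁ G₂ => G₁.posWeights ∧ G₂.posWeights
  | .par G₁ G₂ => G₁.posWeights ∧ G₂.posWeights

/-- Equivalent weight of an SP-graph: `weight(task w) = w`,
`weight(G₁;G₂) = weight G₁ + weight G₂`,
`weight(G₁||G₂) = (weight G₁ ^ α + weight G₂ ^ α)^(1/α)`. -/
noncomputable def SPG.weight (α : ℝ) : SPG → ℝ
  | .task w => w
  | .series G₁ G₂ => G₁.weight α + G₂.weight α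
  | .par G₁ G₂ => ((G₁.weight α) ^ α + (G₂.weight α) ^ α) ^ (1 / α)

/-- Achievable total energies for executing an SP-graph under deadline `D`, each task at
constant (unbounded) speed, respecting the series/parallel structure: in a series
composition the deadline splits additively, in a parallel composition both subgraphs get
the full deadline. -/
def SPG.cost (α : ℝ) : SPG → ℝ → Set ℝ
  | .task w, D => {E | ∃ x : ℝ, 0 < x ∧ x ≤ D ∧ E = w ^ α / x ^ (α - 1)}
  | .series G₁ G₂, D => {E | ∃ D₁ D₂ E₁ E₂ : ℝ, 0 < D₁ ∧ 0 < D₂ ∧ D₁ + D₂ = D ∧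
      E₁ ∈ G₁.cost α D₁ ∧ E₂ ∈ G₂.cost α D₂ ∧ E = E₁ + E₂}
  | .par G₁ G₂, D => {E | ∃ E₁ E₂ : ℝ, E₁ ∈ G₁.cost α D ∧ E₂ ∈ G₂.cost α D ∧ E = E₁ + E₂}

lemma spg_weight_pos (α : ℝ) (hα : 1 < α) : ∀ G : SPG, G.posWeights → 0 < G.weight α
  | .task _, h => h
  | .series G₁ G₂, h => add_pos (spg_weight_pos α hα G₁ h.1) (spg_weight_pos α hα G₂ h.2)
  | .par G₁ G₂, h => by
      have h1 := spg_weight_pos α hα G₁ h.1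
      have h2 := spg_weight_pos α hα G₂ h.2
      exact Real.rpow_pos_of_pos
        (add_pos (Real.rpow_pos_of_pos h1 α) (Real.rpow_pos_of_pos h2 α)) _

lemma energy_eq {α w x : ℝ} (hw : 0 ≤ w) (hx : 0 < x) :
    w ^ α / x ^ (α - 1) = x * (w / x) ^ α := by
  have hxα : (0:ℝ) < x ^ α := Real.rpow_pos_of_pos hx α
  rw [Real.div_rpow hw hx.le, Real.rpow_sub hx, Real.rpow_one]
  field_simp

lemma radon {α : ℝ} (hα : 1 < α) {w₁ w₂ D₁ D₂ : ℝ} (hw₁ : 0 < w₁) (hw₂ : 0 < w₂)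
    (hD₁ : 0 < D₁) (hD₂ : 0 < D₂) :
    (w₁ + w₂) ^ α / (D₁ + D₂) ^ (α - 1) ≤ w₁ ^ α / D₁ ^ (α - 1) + w₂ ^ α / D₂ ^ (α - 1) := by
  have hD : 0 < D₁ + D₂ := by linarith
  have hc := (convexOn_rpow hα.le).2 (Set.mem_Ici.2 (div_pos hw₁ hD₁).le)
      (Set.mem_Ici.2 (div_pos hw₂ hD₂).le) (div_pos hD₁ hD).le (div_pos hD₂ hD).le
      (by field_simp)
  simp only [smul_eq_mul] at hc
  have key : D₁ / (D₁ + D₂) * (w₁ / D₁) + D₂ / (D₁ + D₂) * (w₂ / D₂)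
      = (w₁ + w₂) / (D₁ + D₂) := by field_simp
  rw [key] at hc
  rw [energy_eq (by linarith : (0:ℝ) ≤ w₁ + w₂) hD, energy_eq hw₁.le hD₁,
    energy_eq hw₂.le hD₂]
  have := mul_le_mul_of_nonneg_left hc hD.le
  calc (D₁ + D₂) * ((w₁ + w₂) / (D₁ + D₂)) ^ α
      ≤ (D₁ + D₂) * (D₁ / (D₁ + D₂) * (w₁ / D₁) ^ α + D₂ / (D₁ + D₂) * (w₂ / D₂) ^ α) := this
    _ = D₁ * (w₁ / D₁) ^ α + D₂ * (w₂ / D₂) ^ α := by field_simp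

/-- The minimum energy to execute an SP-graph `G` under deadline `D > 0` equals
`weight(G)^α / D^(α-1)`. -/
theorem spg_min_energy (α : ℝ) (hα : 1 < α) (G : SPG) (hG : G.posWeights)
    (D : ℝ) (hD : 0 < D) :
    IsLeast (G.cost α D) ((G.weight α) ^ α / D ^ (α - 1)) := by
  induction G generalizing D with
  | task w =>
    have hw : 0 < w := hG
    constructor
    · exact ⟨D, hD, le_refl D, rfl⟩
    · rintro E ⟨x, hx, hxD, rfl⟩
      exact div_le_div_of_nonneg_left (by positivity) (Real.rpow_pos_of_pos hx _)
        (Real.rpow_le_rpow hx.le hxD (by linarith))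
  | series G₁ G₂ ih₁ ih₂ =>
    obtain ⟨hG₁, hG₂⟩ := hG
    have hw₁ := spg_weight_pos α hα G₁ hG₁
    have hw₂ := spg_weight_pos α hα G₂ hG₂
    set w₁ := G₁.weight α
    set w₂ := G₂.weight α
    have hW : 0 < w₁ + w₂ := by linarith
    constructor
    · have hD₁ : 0 < w₁ * D / (w₁ + w₂) := by positivity
      have hD₂ : 0 < w₂ * D / (w₁ + w₂) := by positivity
      refine ⟨w₁ * D / (w₁ + w₂), w₂ * D / (w₁ + w₂),
        w₁ ^ α / (w₁ * D / (w₁ + w₂)) ^ (α - 1),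
        w₂ ^ α / (w₂ * D / (w₁ + w₂)) ^ (α - 1),
        hD₁, hD₂, by field_simp, (ih₁ hG₁ _ hD₁).1, (ih₂ hG₂ _ hD₂).1, ?_⟩
      show (w₁ + w₂) ^ α / D ^ (α - 1) = _
      rw [energy_eq hw₁.le hD₁, energy_eq hw₂.le hD₂,
        energy_eq (by linarith : (0:ℝ) ≤ w₁ + w₂) hD]
      have e₁ : w₁ / (w₁ * D / (w₁ + w₂)) = (w₁ + w₂) / D := by field_simp
      have e₂ : w₂ / (w₂ * D / (w₁ + w₂)) = (w₁ + w₂) / D := by field_simp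
      rw [e₁, e₂]
      field_simp
    · rintro E ⟨D₁, D₂, E₁, E₂, hD₁, hD₂, hsum, hE₁, hE₂, rfl⟩
      have h₁ := (ih₁ hG₁ D₁ hD₁).2 hE₁
      have h₂ := (ih₂ hG₂ D₂ hD₂).2 hE₂
      have := radon hα hw₁ hw₂ hD₁ hD₂
      rw [hsum] at this
      calc (w₁ + w₂) ^ α / D ^ (α - 1)
          ≤ w₁ ^ α / D₁ ^ (α - 1) + w₂ ^ α / D₂ ^ (α - 1) := this
        _ ≤ E₁ + E₂ := add_le_add h₁ h₂
  | par G₁ G₂ ih₁ ih₂ =>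
    obtain ⟨hG₁, hG₂⟩ := hG
    have hw₁ := spg_weight_pos α hα G₁ hG₁
    have hw₂ := spg_weight_pos α hα G₂ hG₂
    set w₁ := G₁.weight α
    set w₂ := G₂.weight α
    have hs : 0 ≤ w₁ ^ α + w₂ ^ α := by positivity
    have hkey : ((w₁ ^ α + w₂ ^ α) ^ (1 / α)) ^ α = w₁ ^ α + w₂ ^ α := by
      rw [one_div, Real.rpow_inv_rpow hs (by linarith)]
    constructor
    · refine ⟨w₁ ^ α / D ^ (α - 1), w₂ ^ α / D ^ (α - 1),
        (ih₁ hG₁ D hD).1, (ih₂ hG₂ D hD).1, ?_⟩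
      show ((w₁ ^ α + w₂ ^ α) ^ (1 / α)) ^ α / D ^ (α - 1) = _
      rw [hkey, ← add_div]
    · rintro E ⟨E₁, E₂, hE₁, hE₂, rfl⟩
      have h₁ := (ih₁ hG₁ D hD).2 hE₁
      have h₂ := (ih₂ hG₂ D hD).2 hE₂
      show ((w₁ ^ α + w₂ ^ α) ^ (1 / α)) ^ α / D ^ (α - 1) ≤ E₁ + E₂
      rw [hkey, add_div]
      exact add_le_add h₁ h₂
end

section
/- (Graham's list scheduling bound) For n tasks with processing times x_j > 0 and precedence DAG G on m identical machines, the makespan of any list schedule (which never leaves a machine idle while some available task exists, consistent with a topological order) is at most V + L, where V = (Σ_j x_j)/m is the average volume and L is the length (sum of processing times) of a longest path in G. -/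
open Real Finset

/-- Graham's list-scheduling bound. Consider `n` tasks with processing times `x j > 0`,
a precedence relation `prec` (a DAG), and a nonpreemptive schedule on `m` identical
machines given by start times `σ` and machine assignment `μ`, respecting precedences and
never running two tasks simultaneously on one machine. If the schedule is a *list
schedule* — whenever a task `j` has all its predecessors completed by time `t < σ j`,
every machine is busy at time `t` — then every task finishes by `V + L`, where
`V = (∑ j, x j) / m` is the average volume and `L` is the length of a longest
precedence path (supremum of path sums). -/
theorem graham_list_schedule_bound (n m : ℕ) (hm : 0 < m)
    (x : Fin n → ℝ) (hx : ∀ j, 0 < x j)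
    (prec : Fin n → Fin n → Prop)
    (σ : Fin n → ℝ) (μ : Fin n → Fin m)
    (hstart : ∀ j, 0 ≤ σ j)
    (hprec : ∀ j k, prec j k → σ j + x j ≤ σ k)
    (hnooverlap : ∀ j k, j ≠ k → μ j = μ k → σ j + x j ≤ σ k ∨ σ k + x k ≤ σ j)
    (hlist : ∀ j, ∀ t : ℝ, 0 ≤ t → t < σ j → (∀ k, prec k j → σ k + x k ≤ t) →
      ∀ c : Fin m, ∃ i, μ i = c ∧ σ i ≤ t ∧ t < σ i + x i)
    (L : ℝ)
    (hL : IsLUB {S : ℝ | ∃ l : List (Fin n), l.Chain' prec ∧ S = (l.map x).sum} L) :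
    ∀ j, σ j + x j ≤ (∑ j, x j) / m + L := by
  classical
  set T : ℝ := ∑ j, x j with hTdef
  have hT0 : 0 ≤ T := Finset.sum_nonneg fun i _ => (hx i).le
  have hxs : ∀ l : List (Fin n), (0:ℝ) ≤ (l.map x).sum := by
    intro l
    apply List.sum_nonneg
    intro a ha
    obtain ⟨i, _, rfl⟩ := List.mem_map.mp ha
    exact (hx i).le
  -- volume of union of intervals over a list
  have hvolU : ∀ l : List (Fin n),
      MeasureTheory.volume (⋃ i ∈ l, Set.Ico (σ i) (σ i + x i))
        ≤ ENNReal.ofReal ((l.map x).sum) := by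
    intro l
    induction l with
    | nil => simp
    | cons a l ih =>
      have hU : (⋃ i ∈ (a :: l), Set.Ico (σ i) (σ i + x i))
          = Set.Ico (σ a) (σ a + x a) ∪ ⋃ i ∈ l, Set.Ico (σ i) (σ i + x i) := by
        simp [List.mem_cons, Set.iUnion_or, Set.iUnion_union_distrib,
          Set.iUnion_iUnion_eq_left]
      rw [hU]
      calc MeasureTheory.volume (Set.Ico (σ a) (σ a + x a) ∪ ⋃ i ∈ l, Set.Ico (σ i) (σ i + x i))
          ≤ MeasureTheory.volume (Set.Ico (σ a) (σ a + x a))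
            + MeasureTheory.volume (⋃ i ∈ l, Set.Ico (σ i) (σ i + x i)) :=
            MeasureTheory.measure_union_le _ _
        _ ≤ ENNReal.ofReal (x a) + ENNReal.ofReal ((l.map x).sum) := by
            gcongr
            rw [Real.volume_Ico]
            simp
        _ = ENNReal.ofReal (((a :: l).map x).sum) := by
            rw [List.map_cons, List.sum_cons, ENNReal.ofReal_add (hx a).le (hxs l)]
  -- the "all machines busy" set
  set Full : Set ℝ := {t : ℝ | ∀ c : Fin m, ∃ i, μ i = c ∧ σ i ≤ t ∧ t < σ i + x i}
    with hFull
  -- key inductive claim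
  have key : ∀ N : ℕ, ∀ j : Fin n, (univ.filter fun i => σ i < σ j).card < N →
      ∃ l : List (Fin n), l.Chain' prec ∧ l.getLast? = some j ∧
        Set.Ico (0:ℝ) (σ j) ⊆ (⋃ i ∈ l, Set.Ico (σ i) (σ i + x i)) ∪ Full := by
    intro N
    induction N with
    | zero => intro j hj; exact absurd hj (Nat.not_lt_zero _)
    | succ N ih =>
      intro j hj
      by_cases hp : (univ.filter fun k => prec k j).Nonempty
      · obtain ⟨k, hk, hkmax⟩ := Finset.exists_max_image _ (fun k => σ k + x k) hp
        have hkj : prec k j := (Finset.mem_filter.mp hk).2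
        have hσk : σ k + x k ≤ σ j := hprec k j hkj
        have hσklt : σ k < σ j := lt_of_lt_of_le (by linarith [hx k]) hσk
        have hcard : (univ.filter fun i => σ i < σ k).card < N := by
          have hss : (univ.filter fun i => σ i < σ k) ⊂ (univ.filter fun i => σ i < σ j) := by
            refine Finset.ssubset_iff_of_subset ?_ |>.mpr ⟨k, ?_, ?_⟩
            · intro i hi
              simp only [Finset.mem_filter] at hi ⊢
              exact ⟨hi.1, lt_trans hi.2 hσklt⟩
            · exact Finset.mem_filter.mpr ⟨Finset.mem_univ _, hσklt⟩
            · simp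
          have := Finset.card_lt_card hss
          omega
        obtain ⟨l, hc, hl, hsub⟩ := ih k hcard
        have hlne' : l ≠ [] := by intro h; rw [h] at hl; simp at hl
        have hkmem : k ∈ l := by
          rw [List.getLast?_eq_getLast hlne'] at hl
          exact Option.some.inj hl ▸ List.getLast_mem hlne'
        refine ⟨l ++ [j], ?_, by simp, ?_⟩
        · refine List.isChain_append.mpr ⟨hc, List.isChain_singleton j, ?_⟩
          intro a ha b hb
          simp only [List.head?_cons, Option.mem_def, Option.some.injEq] at hb
          rw [hl] at ha
          simp only [Option.mem_def, Option.some.injEq] at ha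
          subst ha; subst hb
          exact hkj
        · intro t ht
          simp only [Set.mem_Ico] at ht
          by_cases h1 : t < σ k + x k
          · by_cases h2 : t < σ k
            · rcases hsub ⟨ht.1, h2⟩ with h | h
              · left
                obtain ⟨i, hi, hti⟩ := Set.mem_iUnion₂.mp h
                exact Set.mem_biUnion (List.mem_append_left _ hi) hti
              · right; exact h
            · left
              exact Set.mem_biUnion (List.mem_append_left _ hkmem)
                ⟨not_lt.mp h2, h1⟩
          · right
            intro c
            have ht0 : (0:ℝ) ≤ t := ht.1
            refine hlist j t ht0 ht.2 ?_ c
            intro i hi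
            have : σ i + x i ≤ σ k + x k :=
              hkmax i (Finset.mem_filter.mpr ⟨Finset.mem_univ _, hi⟩)
            linarith [not_lt.mp h1]
      · refine ⟨[j], List.isChain_singleton j, rfl, ?_⟩
        intro t ht
        simp only [Set.mem_Ico] at ht
        right
        intro c
        refine hlist j t ht.1 ht.2 ?_ c
        intro k hk
        exact absurd ⟨k, Finset.mem_filter.mpr ⟨Finset.mem_univ _, hk⟩⟩ hp
  -- main argument
  intro j
  obtain ⟨l, hchain, hlast, hsub⟩ := key _ j (Nat.lt_succ_self _)
  have hlne : l ≠ [] := by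
    intro h; rw [h] at hlast; simp at hlast
  have hgl : l.getLast hlne = j := by
    rw [List.getLast?_eq_getLast hlne] at hlast
    exact Option.some.inj hlast
  have hlj : l = l.dropLast ++ [j] := by
    conv_lhs => rw [← List.dropLast_append_getLast hlne, hgl]
  set l₀ := l.dropLast with hl₀
  set S₀ : ℝ := (l₀.map x).sum with hS₀
  set F : Set ℝ := Set.Ico (0:ℝ) (σ j) \ ⋃ i ∈ l₀, Set.Ico (σ i) (σ i + x i) with hF
  have hFB : ∀ c : Fin m,
      F ⊆ ⋃ i ∈ univ.filter (fun i => μ i = c), Set.Ico (σ i) (σ i + x i) := by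
    intro c t ht
    obtain ⟨ht1, ht2⟩ := ht
    rcases hsub ht1 with h | h
    · exfalso
      obtain ⟨i, hi, hti⟩ := Set.mem_iUnion₂.mp h
      rw [hlj] at hi
      rcases List.mem_append.mp hi with hi | hi
      · exact ht2 (Set.mem_biUnion hi hti)
      · simp only [List.mem_singleton] at hi
        subst hi
        exact absurd hti.1 (not_le.mpr ht1.2)
    · obtain ⟨i, hic, h1, h2⟩ := h c
      exact Set.mem_biUnion (Finset.mem_filter.mpr ⟨Finset.mem_univ _, hic⟩) ⟨h1, h2⟩
  have h1 : ENNReal.ofReal (σ j) ≤ MeasureTheory.volume F + ENNReal.ofReal S₀ := by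
    have hsub2 : Set.Ico (0:ℝ) (σ j) ⊆ F ∪ ⋃ i ∈ l₀, Set.Ico (σ i) (σ i + x i) := by
      intro t ht
      by_cases h : t ∈ ⋃ i ∈ l₀, Set.Ico (σ i) (σ i + x i)
      · exact Or.inr h
      · exact Or.inl ⟨ht, h⟩
    calc ENNReal.ofReal (σ j) = MeasureTheory.volume (Set.Ico (0:ℝ) (σ j)) := by
          rw [Real.volume_Ico]; norm_num
      _ ≤ MeasureTheory.volume (F ∪ ⋃ i ∈ l₀, Set.Ico (σ i) (σ i + x i)) :=
          MeasureTheory.measure_mono hsub2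
      _ ≤ MeasureTheory.volume F + MeasureTheory.volume (⋃ i ∈ l₀, Set.Ico (σ i) (σ i + x i)) :=
          MeasureTheory.measure_union_le _ _
      _ ≤ MeasureTheory.volume F + ENNReal.ofReal S₀ := by gcongr; exact hvolU l₀
  have h2 : (m : ENNReal) * MeasureTheory.volume F ≤ ENNReal.ofReal T := by
    have hmrw : (m : ENNReal) * MeasureTheory.volume F = ∑ _c : Fin m, MeasureTheory.volume F := by
      simp [Finset.sum_const, nsmul_eq_mul]
    rw [hmrw]
    calc ∑ _c : Fin m, MeasureTheory.volume F
        ≤ ∑ c : Fin m, ∑ i ∈ univ.filter (fun i => μ i = c), ENNReal.ofReal (x i) := by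
          apply Finset.sum_le_sum
          intro c _
          calc MeasureTheory.volume F
              ≤ MeasureTheory.volume (⋃ i ∈ univ.filter (fun i => μ i = c),
                  Set.Ico (σ i) (σ i + x i)) := MeasureTheory.measure_mono (hFB c)
            _ ≤ ∑ i ∈ univ.filter (fun i => μ i = c),
                  MeasureTheory.volume (Set.Ico (σ i) (σ i + x i)) :=
                MeasureTheory.measure_biUnion_finset_le _ _
            _ = ∑ i ∈ univ.filter (fun i => μ i = c), ENNReal.ofReal (x i) := by
                apply Finset.sum_congr rfl
                intro i _
                rw [Real.volume_Ico]
                simp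
      _ = ∑ i, ENNReal.ofReal (x i) := Finset.sum_fiberwise _ _ _
      _ = ENNReal.ofReal T := by
          rw [hTdef, ENNReal.ofReal_sum_of_nonneg fun i _ => (hx i).le]
  have hS₀0 : 0 ≤ S₀ := hxs l₀
  have h3 : ENNReal.ofReal ((m:ℝ) * σ j) ≤ ENNReal.ofReal (T + m * S₀) := by
    calc ENNReal.ofReal ((m:ℝ) * σ j)
        = (m : ENNReal) * ENNReal.ofReal (σ j) := by
          rw [ENNReal.ofReal_mul (by positivity), ENNReal.ofReal_natCast]
      _ ≤ (m : ENNReal) * (MeasureTheory.volume F + ENNReal.ofReal S₀) :=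
          mul_le_mul_right h1 _
      _ = (m : ENNReal) * MeasureTheory.volume F + (m : ENNReal) * ENNReal.ofReal S₀ := mul_add _ _ _
      _ ≤ ENNReal.ofReal T + ENNReal.ofReal ((m:ℝ) * S₀) := by
          gcongr
          rw [ENNReal.ofReal_mul (by positivity), ENNReal.ofReal_natCast]
      _ = ENNReal.ofReal (T + (m:ℝ) * S₀) := by
          rw [ENNReal.ofReal_add hT0 (by positivity)]
  have h4 : (m:ℝ) * σ j ≤ T + m * S₀ :=
    (ENNReal.ofReal_le_ofReal_iff (by positivity)).mp h3
  have hm' : (0:ℝ) < m := by exact_mod_cast hm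
  have hS' : S₀ + x j ≤ L := by
    apply hL.1
    refine ⟨l, hchain, ?_⟩
    rw [hlj, List.map_append, List.sum_append]
    simp [hS₀, hl₀]
  have h6 : (m:ℝ) * (σ j + x j) ≤ T + m * L := by
    have := mul_le_mul_of_nonneg_left hS' hm'.le
    nlinarith
  calc σ j + x j = ((m:ℝ) * (σ j + x j)) / m := by field_simp
    _ ≤ (T + m * L) / m := by gcongr
    _ = T / m + L := by field_simp
end

section
/- (APX-sched guarantee) Suppose an optimal schedule meets deadline D using speeds at most s_max/2 with total energy OPT. Let (x_j*) minimize Σ_j w_j^α/x_j^{α-1} subject to: (Σ_j x_j)/m ≤ D/2, every directed path in G has total length ≤ D/2, and w_j/s_max ≤ x_j. Then (a) the list schedule with processing times x_j* has makespan ≤ D, and (b) Σ_j w_j^α/(x_j*)^{α-1} ≤ 2^{α-1}·OPT. -/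
open Real Finset

/-- Measure of union of intervals over a list is at most the sum of lengths. -/
lemma list_ico_vol {ι : Type*} (σ x : ι → ℝ) (hx : ∀ i, 0 ≤ x i) :
    ∀ l : List ι, MeasureTheory.volume (⋃ i, ⋃ (_ : i ∈ l), Set.Ico (σ i) (σ i + x i)) ≤
      ENNReal.ofReal ((l.map x).sum) := by
  intro l
  induction l with
  | nil => simp
  | cons a l ih =>
    have : (⋃ i, ⋃ (_ : i ∈ a :: l), Set.Ico (σ i) (σ i + x i)) =
        Set.Ico (σ a) (σ a + x a) ∪ ⋃ i, ⋃ (_ : i ∈ l), Set.Ico (σ i) (σ i + x i) := by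
      simp only [List.mem_cons]
      exact Set.iUnion_iUnion_eq_or_left
    rw [this]
    refine le_trans (MeasureTheory.measure_union_le _ _) ?_
    have hsum : ((a :: l).map x).sum = x a + (l.map x).sum := by simp
    have hnn : (0:ℝ) ≤ (l.map x).sum := List.sum_nonneg
      (fun b hb => by obtain ⟨i, _, rfl⟩ := List.mem_map.mp hb; exact hx i)
    rw [hsum, ENNReal.ofReal_add (hx a) hnn]
    refine add_le_add ?_ ih
    rw [Real.volume_Ico]; simp

/-- APX-sched guarantee. Tasks with weights `w j > 0`, precedence DAG `prec`, `m`
identical machines, power `s^α` with `α ≥ 1`, deadline `D` and speed bound `smax`.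
Suppose an optimal schedule (start times `σ⋆`, machines `μ⋆`, speeds `s⋆ j ≤ smax/2`)
meets deadline `D` with total energy `OPT`. Let `x` minimize `∑ j, w j ^ α / x j ^ (α-1)`
subject to `(∑ j, x j)/m ≤ D/2`, every precedence path having total length `≤ D/2`, and
`w j / smax ≤ x j`. Then (a) any list schedule with processing times `x` has makespan
`≤ D`, and (b) `∑ j, w j ^ α / x j ^ (α-1) ≤ 2^(α-1) * OPT`. -/
theorem apx_sched_guarantee (n m : ℕ) (hm : 0 < m)
    (α D smax : ℝ) (hα : 1 ≤ α) (hD : 0 < D) (hsmax : 0 < smax)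
    (w : Fin n → ℝ) (hw : ∀ j, 0 < w j)
    (prec : Fin n → Fin n → Prop)
    -- the optimal schedule, with speeds at most `smax / 2`, meeting deadline `D`
    (σopt : Fin n → ℝ) (μopt : Fin n → Fin m) (sopt : Fin n → ℝ)
    (hsopt : ∀ j, 0 < sopt j ∧ sopt j ≤ smax / 2)
    (hstartopt : ∀ j, 0 ≤ σopt j)
    (hprecopt : ∀ j k, prec j k → σopt j + w j / sopt j ≤ σopt k)
    (hnooverlapopt : ∀ j k, j ≠ k → μopt j = μopt k →
      σopt j + w j / sopt j ≤ σopt k ∨ σopt k + w k / sopt k ≤ σopt j)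
    (hdeadlineopt : ∀ j, σopt j + w j / sopt j ≤ D)
    (OPT : ℝ) (hOPT : OPT = ∑ j, w j * sopt j ^ (α - 1))
    -- `x` is an optimal solution of the convex relaxation
    (x : Fin n → ℝ)
    (hfeas : (∀ j, 0 < x j) ∧ (∑ j, x j) / m ≤ D / 2 ∧
      (∀ l : List (Fin n), l.Chain' prec → (l.map x).sum ≤ D / 2) ∧
      (∀ j, w j / smax ≤ x j))
    (hmin : ∀ y : Fin n → ℝ,
      (∀ j, 0 < y j) → (∑ j, y j) / m ≤ D / 2 →
      (∀ l : List (Fin n), l.Chain' prec → (l.map y).sum ≤ D / 2) →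
      (∀ j, w j / smax ≤ y j) →
      ∑ j, w j ^ α / x j ^ (α - 1) ≤ ∑ j, w j ^ α / y j ^ (α - 1)) :
    -- (a) any list schedule with processing times `x` meets the deadline `D`
    (∀ (σ : Fin n → ℝ) (μ : Fin n → Fin m),
      (∀ j, 0 ≤ σ j) →
      (∀ j k, prec j k → σ j + x j ≤ σ k) →
      (∀ j k, j ≠ k → μ j = μ k → σ j + x j ≤ σ k ∨ σ k + x k ≤ σ j) →
      (∀ j, ∀ t : ℝ, 0 ≤ t → t < σ j → (∀ k, prec k j → σ k + x k ≤ t) →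
        ∀ c : Fin m, ∃ i, μ i = c ∧ σ i ≤ t ∧ t < σ i + x i) →
      ∀ j, σ j + x j ≤ D) ∧
    -- (b) the energy is at most `2^(α-1)` times the optimum
    ∑ j, w j ^ α / x j ^ (α - 1) ≤ 2 ^ (α - 1) * OPT := by
  classical
  obtain ⟨hxpos, hvol, hchain, hspeed⟩ := hfeas
  constructor
  · -- part (a)
    intro σ μ hσ hprec hno hbusy
    -- the "all machines busy" set
    set B : Set ℝ := ⋂ c : Fin m, ⋃ i, ⋃ (_ : μ i = c), Set.Ico (σ i) (σ i + x i) with hBdef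
    have hBvol : MeasureTheory.volume B ≤ ENNReal.ofReal (D / 2) := by
      have hc : ∀ c : Fin m, MeasureTheory.volume B ≤
          ∑ i ∈ Finset.univ.filter (fun i => μ i = c), ENNReal.ofReal (x i) := by
        intro c
        have hsub : B ⊆ ⋃ i ∈ Finset.univ.filter (fun i => μ i = c),
            Set.Ico (σ i) (σ i + x i) := by
          refine le_trans (Set.iInter_subset _ c) ?_
          intro t ht
          simp only [Set.mem_iUnion, Finset.mem_filter, Finset.mem_univ, true_and] at ht ⊢
          obtain ⟨i, hi, hti⟩ := ht
          exact ⟨i, hi, hti⟩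
        refine le_trans (MeasureTheory.measure_mono hsub) ?_
        refine le_trans (MeasureTheory.measure_biUnion_finset_le _ _) ?_
        refine Finset.sum_le_sum fun i _ => ?_
        rw [Real.volume_Ico]; simp
      have hmul : (m : ENNReal) * MeasureTheory.volume B ≤ ENNReal.ofReal (∑ j, x j) := by
        have h1 : (m : ENNReal) * MeasureTheory.volume B =
            ∑ _c : Fin m, MeasureTheory.volume B := by
          simp [Finset.sum_const, Finset.card_univ, mul_comm]
        rw [h1]
        refine le_trans (Finset.sum_le_sum fun c _ => hc c) ?_
        rw [Finset.sum_fiberwise Finset.univ μ (fun i => ENNReal.ofReal (x i))]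
        rw [ENNReal.ofReal_sum_of_nonneg fun i _ => (hxpos i).le]
      have hsx : (∑ j, x j) ≤ (m : ℝ) * (D / 2) := by
        rw [div_le_iff₀ (by exact_mod_cast hm)] at hvol
        linarith [hvol]
      have h2 : ENNReal.ofReal (∑ j, x j) ≤ (m : ENNReal) * ENNReal.ofReal (D / 2) := by
        refine le_trans (ENNReal.ofReal_le_ofReal hsx) ?_
        rw [ENNReal.ofReal_mul (by positivity)]
        simp
      have := le_trans hmul h2
      rwa [ENNReal.mul_le_mul_iff_right (by exact_mod_cast hm.ne') (by simp)] at this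
    -- build the chain covering idle time before σ j
    have key : ∀ N (j : Fin n), (Finset.univ.filter fun i => σ i < σ j).card ≤ N →
        ∃ l : List (Fin n), List.Chain' prec (l ++ [j]) ∧
          ∀ t, 0 ≤ t → t < σ j → t ∈ B ∨ ∃ i ∈ l, σ i ≤ t ∧ t < σ i + x i := by
      intro N
      induction N with
      | zero =>
        intro j hcard
        refine ⟨[], List.isChain_singleton _, fun t ht0 htj => Or.inl ?_⟩
        have hnopred : ∀ k, prec k j → σ k + x k ≤ t := by
          intro k hk
          exfalso
          have hklt : σ k < σ j := lt_of_lt_of_le (lt_add_of_pos_right _ (hxpos k))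
            (hprec k j hk)
          have : k ∈ Finset.univ.filter fun i => σ i < σ j := by simp [hklt]
          have := Finset.card_pos.mpr ⟨k, this⟩
          omega
        have hb := hbusy j t ht0 htj hnopred
        simp only [hBdef, Set.mem_iInter, Set.mem_iUnion]
        intro c
        obtain ⟨i, hic, h1, h2⟩ := hb c
        exact ⟨i, hic, h1, h2⟩
      | succ N ih =>
        intro j hcard
        by_cases hP : (Finset.univ.filter fun k => prec k j).Nonempty
        · obtain ⟨k, hkmem, hkmax⟩ := Finset.exists_max_image _ (fun k => σ k + x k) hP
          have hkj : prec k j := by simpa using hkmem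
          have hkfin : σ k + x k ≤ σ j := hprec k j hkj
          have hklt : σ k < σ j := lt_of_lt_of_le (lt_add_of_pos_right _ (hxpos k)) hkfin
          have hcard' : (Finset.univ.filter fun i => σ i < σ k).card ≤ N := by
            have hss : (Finset.univ.filter fun i => σ i < σ k) ⊂
                (Finset.univ.filter fun i => σ i < σ j) := by
              refine Finset.ssubset_iff_of_subset (fun i hi => ?_) |>.mpr ⟨k, by simp [hklt],
                by simp⟩
              simp only [Finset.mem_filter, Finset.mem_univ, true_and] at hi ⊢
              exact lt_trans hi hklt
            have := Finset.card_lt_card hss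
            omega
          obtain ⟨l', hl'chain, hl'cov⟩ := ih k hcard'
          refine ⟨l' ++ [k], ?_, ?_⟩
          · change List.IsChain prec _
            rw [List.isChain_append]
            refine ⟨hl'chain, by simp, ?_⟩
            intro a ha b hb
            simp only [List.head?_cons, Option.mem_def, Option.some.injEq] at hb
            rw [List.getLast?_concat] at ha
            simp only [Option.mem_def, Option.some.injEq] at ha
            subst ha; subst hb; exact hkj
          · intro t ht0 htj
            by_cases hbB : t ∈ B
            · exact Or.inl hbB
            · -- not busy: some predecessor still running, hence t < σ k + x k
              have hex : ∃ k', prec k' j ∧ t < σ k' + x k' := by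
                by_contra hcon
                push_neg at hcon
                have hnopred : ∀ k', prec k' j → σ k' + x k' ≤ t := fun k' hk' =>
                  (hcon k' hk')
                have hb := hbusy j t ht0 htj hnopred
                apply hbB
                simp only [hBdef, Set.mem_iInter, Set.mem_iUnion]
                intro c
                obtain ⟨i, hic, h1, h2⟩ := hb c
                exact ⟨i, hic, h1, h2⟩
              obtain ⟨k', hk'j, hk't⟩ := hex
              have htk : t < σ k + x k :=
                lt_of_lt_of_le hk't (hkmax k' (by simp [hk'j]))
              by_cases hts : σ k ≤ t
              · exact Or.inr ⟨k, by simp, hts, htk⟩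
              · push_neg at hts
                rcases hl'cov t ht0 hts with h | ⟨i, hi, h1, h2⟩
                · exact Or.inl h
                · exact Or.inr ⟨i, by simp [hi], h1, h2⟩
        · -- no predecessors: all of [0, σ j) is busy
          refine ⟨[], List.isChain_singleton _, fun t ht0 htj => Or.inl ?_⟩
          have hnopred : ∀ k, prec k j → σ k + x k ≤ t := by
            intro k hk
            exact (hP ⟨k, Finset.mem_filter.mpr ⟨Finset.mem_univ k, hk⟩⟩).elim
          have hb := hbusy j t ht0 htj hnopred
          simp only [hBdef, Set.mem_iInter, Set.mem_iUnion]
          intro c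
          obtain ⟨i, hic, h1, h2⟩ := hb c
          exact ⟨i, hic, h1, h2⟩
    intro j
    obtain ⟨l, hlchain, hlcov⟩ := key _ j le_rfl
    have hsub : Set.Ico (0 : ℝ) (σ j) ⊆
        B ∪ ⋃ i, ⋃ (_ : i ∈ l), Set.Ico (σ i) (σ i + x i) := by
      intro t ht
      obtain ⟨ht0, htj⟩ := ht
      rcases hlcov t ht0 htj with h | ⟨i, hi, h1, h2⟩
      · exact Or.inl h
      · exact Or.inr (by simp only [Set.mem_iUnion]; exact ⟨i, hi, h1, h2⟩)
    have hσj : ENNReal.ofReal (σ j) ≤ ENNReal.ofReal (D / 2) +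
        ENNReal.ofReal ((l.map x).sum) := by
      have h1 : ENNReal.ofReal (σ j) = MeasureTheory.volume (Set.Ico (0 : ℝ) (σ j)) := by
        rw [Real.volume_Ico]; simp
      rw [h1]
      refine le_trans (MeasureTheory.measure_mono hsub) ?_
      refine le_trans (MeasureTheory.measure_union_le _ _) ?_
      exact add_le_add hBvol (list_ico_vol σ x (fun i => (hxpos i).le) l)
    have hσjr : σ j ≤ D / 2 + (l.map x).sum := by
      have hnn : (0:ℝ) ≤ (l.map x).sum := by
        refine List.sum_nonneg fun a ha => ?_
        obtain ⟨i, _, rfl⟩ := List.mem_map.mp ha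
        exact (hxpos i).le
      rw [← ENNReal.ofReal_add (by positivity) hnn] at hσj
      exact (ENNReal.ofReal_le_ofReal_iff (by positivity)).mp hσj
    have hchainj : (l.map x).sum + x j ≤ D / 2 := by
      have := hchain (l ++ [j]) hlchain
      simpa using this
    linarith
  · -- part (b)
    set e : Fin n → ℝ := fun j => w j / sopt j with hedef
    set y : Fin n → ℝ := fun j => w j / (2 * sopt j) with hydef
    have hepos : ∀ j, 0 < e j := fun j => div_pos (hw j) (hsopt j).1
    have hye : ∀ j, y j = e j / 2 := by
      intro j
      rw [hydef, hedef]
      field_simp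
    have hypos : ∀ j, 0 < y j := fun j => by
      rw [hye j]; linarith [hepos j]
    -- volume feasibility for y
    have hesum : (∑ j, e j) ≤ (m : ℝ) * D := by
      have hc : ∀ c : Fin m,
          (∑ j ∈ Finset.univ.filter (fun j => μopt j = c), e j) ≤ D := by
        intro c
        set S := Finset.univ.filter (fun j => μopt j = c) with hS
        have hdisj : (↑S : Set (Fin n)).PairwiseDisjoint
            (fun j => Set.Ico (σopt j) (σopt j + e j)) := by
          intro a ha b hb hab
          simp only [hS, Finset.coe_filter, Set.mem_setOf_eq, Finset.mem_univ, true_and]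
            at ha hb
          have := hnooverlapopt a b hab (ha.trans hb.symm)
          rw [Function.onFun, Set.disjoint_left]
          intro t hta htb
          obtain ⟨ha1, ha2⟩ := hta
          obtain ⟨hb1, hb2⟩ := htb
          rcases this with h | h
          · rw [hedef] at ha2; simp only at ha2; linarith
          · rw [hedef] at hb2; simp only at hb2; linarith
        have hmeas := MeasureTheory.measure_biUnion_finset (μ := MeasureTheory.volume)
          hdisj (fun j _ => measurableSet_Ico)
        have hsub : (⋃ j ∈ S, Set.Ico (σopt j) (σopt j + e j)) ⊆ Set.Ico 0 D := by
          intro t ht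
          simp only [Set.mem_iUnion] at ht
          obtain ⟨j, _, h1, h2⟩ := ht
          exact ⟨le_trans (hstartopt j) h1, lt_of_lt_of_le h2 (hdeadlineopt j)⟩
        have hle := MeasureTheory.measure_mono hsub (μ := MeasureTheory.volume)
        rw [hmeas] at hle
        have hivol : ∀ j ∈ S, MeasureTheory.volume (Set.Ico (σopt j) (σopt j + e j)) =
            ENNReal.ofReal (e j) := by
          intro j _; rw [Real.volume_Ico]; simp
        rw [Finset.sum_congr rfl hivol, Real.volume_Ico, sub_zero] at hle
        rw [← ENNReal.ofReal_sum_of_nonneg (fun j _ => (hepos j).le)] at hle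
        exact (ENNReal.ofReal_le_ofReal_iff hD.le).mp hle
      have := Finset.sum_le_sum (fun c (_ : c ∈ (Finset.univ : Finset (Fin m))) => hc c)
      rw [Finset.sum_fiberwise Finset.univ μopt e] at this
      simpa [mul_comm] using this
    have hyvol : (∑ j, y j) / m ≤ D / 2 := by
      have h1 : (∑ j, y j) = (∑ j, e j) / 2 := by
        rw [Finset.sum_div]
        exact Finset.sum_congr rfl fun j _ => hye j
      rw [h1, div_le_iff₀ (by exact_mod_cast hm)]
      have : (0:ℝ) < (m:ℝ) := by exact_mod_cast hm
      nlinarith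
    -- chain feasibility for y
    have hchaine : ∀ (l : List (Fin n)) (a : Fin n), List.Chain' prec (a :: l) →
        σopt a + ((a :: l).map e).sum ≤ D := by
      intro l
      induction l with
      | nil => intro a _; simpa using hdeadlineopt a
      | cons b l ihl =>
        intro a h
        change List.IsChain prec _ at h
        rw [List.isChain_cons_cons] at h
        have h2 := ihl b h.2
        have h1 := hprecopt a b h.1
        have hea : e a = w a / sopt a := rfl
        simp only [List.map_cons, List.sum_cons] at h2 ⊢
        linarith
    have hychain : ∀ l : List (Fin n), l.Chain' prec → ((l.map y).sum) ≤ D / 2 := by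
      intro l hl
      have h1 : (l.map y).sum = (l.map e).sum / 2 := by
        induction l with
        | nil => simp
        | cons a l ihl =>
          simp only [List.map_cons, List.sum_cons, hye a,
            ihl (List.IsChain.tail hl)]
          ring
      rw [h1]
      rcases l with _ | ⟨a, l⟩
      · simp; positivity
      · have := hchaine l a hl
        have := hstartopt a
        linarith
    -- speed feasibility for y
    have hyspeed : ∀ j, w j / smax ≤ y j := by
      intro j
      have h1 : 0 < 2 * sopt j := by linarith [(hsopt j).1]
      have h2 : 2 * sopt j ≤ smax := by linarith [(hsopt j).2]
      show w j / smax ≤ w j / (2 * sopt j)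
      gcongr
      exact (hw j).le
    have hkey := hmin y hypos hyvol hychain hyspeed
    have heq : ∑ j, w j ^ α / y j ^ (α - 1) = 2 ^ (α - 1) * OPT := by
      rw [hOPT, Finset.mul_sum]
      refine Finset.sum_congr rfl fun j _ => ?_
      have hwj := hw j
      have hsj := (hsopt j).1
      have h2s : (0:ℝ) < 2 * sopt j := by linarith
      have hya : y j ^ (α - 1) = w j ^ (α - 1) / (2 * sopt j) ^ (α - 1) := by
        rw [hydef]
        exact Real.div_rpow hwj.le h2s.le _
      have hwa : w j ^ α = w j * w j ^ (α - 1) := by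
        have : α = 1 + (α - 1) := by ring
        rw [this, Real.rpow_add hwj, Real.rpow_one]
        ring_nf
      have h2sa : (2 * sopt j) ^ (α - 1) = 2 ^ (α - 1) * sopt j ^ (α - 1) :=
        Real.mul_rpow (by norm_num) hsj.le
      rw [hya, hwa, h2sa]
      have hw1 : w j ^ (α - 1) ≠ 0 := (Real.rpow_pos_of_pos hwj _).ne'
      field_simp
    rw [← heq]
    exact hkey
end
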